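/- For every extended template (Λ, A, B), the length satisfies l(Λ) ≤ δ(Λ) + δ(A) + δ(B). -/
import Mathlib


open scoped Classical

/-- A matrix with non-negative integer entries and finite support, indexed by `i,j ≥ 1`. -/
def MatOK (A : ℕ × ℕ →₀ ℕ) : Prop := ∀ p ∈ A.support, 1 ≤ p.1 ∧ 1 ≤ p.2

/-- The cogenus `δ(A) = Σ_{i,j≥1} i·j·a_{ij}`. -/
def mdelta (A : ℕ × ℕ →₀ ℕ) : ℕ := A.sum fun p v => p.1 * p.2 * v

/-- The 1-norm `‖A‖₁ = Σ_{i,j} a_{ij}`. -/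
def mnorm (A : ℕ × ℕ →₀ ℕ) : ℕ := A.sum fun _ v => v

/-- `l(A)`: the largest row index of a non-zero entry of `A` (`0` for the zero matrix). -/
def rowLen (A : ℕ × ℕ →₀ ℕ) : ℕ := A.support.sup fun p => p.1

/-- The weighted lower sum sequence `wls(A)_i = Σ_{i' ≥ i, j ≥ 1} j·a_{i'j}`. -/
def wls (A : ℕ × ℕ →₀ ℕ) (i : ℕ) : ℕ :=
  A.sum fun p v => if i ≤ p.1 then p.2 * v else 0

/-- The cogenus of a multiset of weighted edges `(i,j,w)`: each edge contributes
`(j − i)·w − 1`. -/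
def edgesDelta (E : Multiset (ℕ × ℕ × ℕ)) : ℕ :=
  (E.map fun e => (e.2.1 - e.1) * e.2.2 - 1).sum

/-- `κ_j`: the total weight of the edges `i → k` with `i < j ≤ k`. -/
def edgesKappa (E : Multiset (ℕ × ℕ × ℕ)) (j : ℕ) : ℕ :=
  ((E.filter fun e => e.1 < j ∧ j ≤ e.2.1).map fun e => e.2.2).sum

/-- The data of an extended template: a directed multigraph `Λ` on vertices `{0,…,l}`
(the edge `(i,j,w)` goes from `i` to `j` and has weight `w`), together with two
finitely supported non-negative integer matrices `A` and `B`. -/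
structure PreExtTemplate where
  l : ℕ
  edges : Multiset (ℕ × ℕ × ℕ)
  A : ℕ × ℕ →₀ ℕ
  B : ℕ × ℕ →₀ ℕ

/-- `(Λ, A, B)` is an extended template: edges of `Λ` go from smaller to larger vertices
(within `{0,…,l}`) and have positive weight, length-one edges have weight `≥ 2`, the
matrices are supported on positive indices with `l(Λ) ≥ max(l(A), l(B))`, and every
vertex `j` with `1 ≤ j ≤ l(Λ) − max(l(A), l(B))` is covered by an edge `i → k` of `Λ`
with `i < j < k`. -/
def IsExtTemplate (T : PreExtTemplate) : Prop :=
  (∀ e ∈ T.edges, e.1 < e.2.1 ∧ e.2.1 ≤ T.l ∧ 1 ≤ e.2.2) ∧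
  (∀ e ∈ T.edges, e.2.1 = e.1 + 1 → 2 ≤ e.2.2) ∧
  MatOK T.A ∧ MatOK T.B ∧
  max (rowLen T.A) (rowLen T.B) ≤ T.l ∧
  (∀ j, 1 ≤ j → j + max (rowLen T.A) (rowLen T.B) ≤ T.l →
    ∃ e ∈ T.edges, e.1 < j ∧ j < e.2.1)

/-- The quantity `l(Λ) − i + 1 + κ_i(Λ) + wls(A)_{l(Λ)+1−i} + wls(B)_{l(Λ)+1−i}`
whose maximum over `1 ≤ i ≤ l(Λ)` is `d_min(Λ, A, B)`. -/
def gfun (T : PreExtTemplate) (i : ℕ) : ℕ :=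
  T.l - i + 1 + edgesKappa T.edges i + wls T.A (T.l + 1 - i) + wls T.B (T.l + 1 - i)

/-- `d_min(Λ, A, B) = max_{1 ≤ i ≤ l(Λ)} (l(Λ) − i + 1 + κ_i(Λ) + wls(A)_{l+1−i} + wls(B)_{l+1−i})`. -/
def dMin (T : PreExtTemplate) : ℕ := (Finset.Icc 1 T.l).sup (gfun T)

lemma rowLen_le_mdelta (A : ℕ × ℕ →₀ ℕ) (h : MatOK A) : rowLen A ≤ mdelta A := by
  apply Finset.sup_le
  intro p hp
  have h2 : 1 ≤ p.2 := (h p hp).2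
  have ha : 1 ≤ A p := Nat.one_le_iff_ne_zero.mpr (Finsupp.mem_support_iff.mp hp)
  calc p.1 ≤ p.1 * p.2 := Nat.le_mul_of_pos_right _ h2
  _ ≤ p.1 * p.2 * A p := Nat.le_mul_of_pos_right _ ha
  _ ≤ mdelta A := by
      rw [mdelta, Finsupp.sum]
      exact Finset.single_le_sum (f := fun q : ℕ × ℕ => q.1 * q.2 * A q) (fun q _ => Nat.zero_le _) hp

/-- For every extended template `(Λ, A, B)`, the length satisfies
`l(Λ) ≤ δ(Λ) + δ(A) + δ(B)`. -/
theorem extLength_le (T : PreExtTemplate) (hT : IsExtTemplate T) :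
    T.l ≤ edgesDelta T.edges + mdelta T.A + mdelta T.B := by
  obtain ⟨he, _, hA, hB, hm, hcov⟩ := hT
  set m := max (rowLen T.A) (rowLen T.B) with hmdef
  have hAle : rowLen T.A ≤ mdelta T.A := rowLen_le_mdelta _ hA
  have hBle : rowLen T.B ≤ mdelta T.B := rowLen_le_mdelta _ hB
  have hAm : rowLen T.A ≤ m := le_max_left _ _
  have hBm : rowLen T.B ≤ m := le_max_right _ _
  have hsub : Finset.Icc 1 (T.l - m) ⊆
      T.edges.toFinset.biUnion (fun e => Finset.Ioo e.1 e.2.1) := by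
    intro j hj
    simp only [Finset.mem_Icc] at hj
    obtain ⟨e, heE, h1, h2⟩ := hcov j hj.1 (by omega)
    exact Finset.mem_biUnion.mpr ⟨e, Multiset.mem_toFinset.mpr heE,
      Finset.mem_Ioo.mpr ⟨h1, h2⟩⟩
  have hcard : T.l - m ≤ edgesDelta T.edges := by
    have h1 := Finset.card_le_card hsub
    have h2 := Finset.card_biUnion_le (s := T.edges.toFinset)
      (t := fun e => Finset.Ioo e.1 e.2.1)
    have h3 : ∑ e ∈ T.edges.toFinset, (Finset.Ioo e.1 e.2.1).card
        = (T.edges.dedup.map fun e => e.2.1 - e.1 - 1).sum := by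
      simp only [Nat.card_Ioo]
      rfl
    have h4 : (T.edges.dedup.map fun e : ℕ × ℕ × ℕ => e.2.1 - e.1 - 1).sum
        ≤ (T.edges.map fun e : ℕ × ℕ × ℕ => e.2.1 - e.1 - 1).sum := by
      obtain ⟨t, ht⟩ := Multiset.le_iff_exists_add.mp (Multiset.dedup_le T.edges)
      calc (T.edges.dedup.map fun e : ℕ × ℕ × ℕ => e.2.1 - e.1 - 1).sum
          ≤ (T.edges.dedup.map fun e : ℕ × ℕ × ℕ => e.2.1 - e.1 - 1).sum
            + (t.map fun e : ℕ × ℕ × ℕ => e.2.1 - e.1 - 1).sum := Nat.le_add_right _ _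
      _ = (T.edges.map fun e : ℕ × ℕ × ℕ => e.2.1 - e.1 - 1).sum := by
          conv_rhs => rw [ht]
          rw [Multiset.map_add, Multiset.sum_add]
    have h5 : (T.edges.map fun e : ℕ × ℕ × ℕ => e.2.1 - e.1 - 1).sum
        ≤ edgesDelta T.edges := by
      apply Multiset.sum_map_le_sum_map
      intro e heE
      obtain ⟨hlt, _, hw⟩ := he e heE
      have : e.2.1 - e.1 ≤ (e.2.1 - e.1) * e.2.2 := Nat.le_mul_of_pos_right _ hw
      omega
    simp only [Nat.card_Icc] at h1
    omega
  omega
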